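/- (Kowaleskian estimate.) Let c : [a,b] → ℝ be continuous with c(t) ≥ Λ1 > 0 for all t ∈ [a,b], let c∞ ≥ Λ1 be a real number, let λ > 0, and let u : [a,b] → ℝ be a solution of u''(t) + λ² c(t) u(t) = 0. Then the Kowaleskian energy E(t) = u'(t)²/√c∞ + λ²√c∞·u(t)² satisfies E(b) ≤ E(a)·exp( (λ/Λ1^{1/2}) ∫_a^b |c(τ) − c∞| dτ ). -/

import Mathlib

open Real Set MeasureTheory

/-- The Kowaleskian energy `E(t) = u'(t)²/√c∞ + λ²·√c∞·u(t)²`. -/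
noncomputable def kowE (cinf lam : ℝ) (u u' : ℝ → ℝ) (t : ℝ) : ℝ :=
  (u' t) ^ 2 / Real.sqrt cinf + lam ^ 2 * Real.sqrt cinf * (u t) ^ 2

lemma kow_key (lam s r d U V : ℝ) (hlam : 0 < lam) (hr : 0 < r) (hrs : r ≤ s) :
    -(2 * lam ^ 2 * U * V * d) / s ≤ lam / r * |d| * (V ^ 2 / s + lam ^ 2 * s * U ^ 2) := by
  have hs : 0 < s := lt_of_lt_of_le hr hrs
  have hd : (0:ℝ) ≤ |d| := abs_nonneg d
  have hU2 : (lam * s * |U|) ^ 2 = lam ^ 2 * s ^ 2 * U ^ 2 := by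
    rw [mul_pow, mul_pow, sq_abs]
  have h2 : 2 * lam * |U| * |V| * s ≤ V ^ 2 + lam ^ 2 * s ^ 2 * U ^ 2 := by
    nlinarith [sq_nonneg (|V| - lam * s * |U|), hU2, sq_abs V]
  have h3 : -(2 * lam ^ 2 * U * V * d) ≤ 2 * lam ^ 2 * (|U| * |V| * |d|) := by
    have h : -(U * V * d) ≤ |U| * |V| * |d| := by
      calc -(U * V * d) ≤ |U * V * d| := neg_le_abs _
      _ = |U| * |V| * |d| := by rw [abs_mul, abs_mul]
    nlinarith [h]
  have hR : lam / r * |d| * (V ^ 2 / s + lam ^ 2 * s * U ^ 2)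
      = lam * |d| * (V ^ 2 + lam ^ 2 * s ^ 2 * U ^ 2) / (r * s) := by
    rw [eq_div_iff (by positivity)]
    field_simp
  rw [hR, div_le_div_iff₀ hs (by positivity)]
  have hX : (0:ℝ) ≤ 2 * lam ^ 2 * (|U| * |V| * |d|) := by positivity
  nlinarith [mul_le_mul_of_nonneg_right h3 (mul_pos hr hs).le,
    mul_le_mul_of_nonneg_left h2 (mul_nonneg (mul_nonneg hlam.le hd) hs.le),
    mul_le_mul_of_nonneg_right hrs (mul_nonneg hX hs.le)]

theorem kowaleskian_estimate
    (a b Λ1 cinf lam : ℝ) (hab : a ≤ b) (hΛ1 : 0 < Λ1) (hcinf : Λ1 ≤ cinf)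
    (hlam : 0 < lam)
    (c : ℝ → ℝ) (hc_cont : ContinuousOn c (Icc a b))
    (hc_lb : ∀ t ∈ Icc a b, Λ1 ≤ c t)
    (u u' : ℝ → ℝ)
    (hu : ∀ t ∈ Icc a b, HasDerivWithinAt u (u' t) (Icc a b) t)
    (hu' : ∀ t ∈ Icc a b, HasDerivWithinAt u' (-(lam ^ 2 * c t * u t)) (Icc a b) t) :
    kowE cinf lam u u' b ≤
      kowE cinf lam u u' a *
        Real.exp (lam / Real.sqrt Λ1 * ∫ τ in a..b, |c τ - cinf|) := by
  set s := Real.sqrt cinf with hs_def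
  set r := Real.sqrt Λ1 with hr_def
  have hr : 0 < r := Real.sqrt_pos.mpr hΛ1
  have hrs : r ≤ s := Real.sqrt_le_sqrt hcinf
  have hs : 0 < s := lt_of_lt_of_le hr hrs
  have hs2 : s * s = cinf := Real.mul_self_sqrt (hΛ1.le.trans hcinf)
  set k := lam / r with hk_def
  set g : ℝ → ℝ := fun τ => |c τ - cinf| with hg_def
  have hg_cont : ContinuousOn g (Icc a b) := (hc_cont.sub continuousOn_const).abs
  set G : ℝ → ℝ := fun x => ∫ τ in a..x, g τ with hG_def
  set E : ℝ → ℝ := kowE cinf lam u u' with hE_def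
  set E' : ℝ → ℝ := fun t =>
    2 * u' t ^ 1 * -(lam ^ 2 * c t * u t) / s + lam ^ 2 * s * (2 * u t ^ 1 * u' t)
    with hE'_def
  have hE : ∀ t ∈ Icc a b, HasDerivWithinAt E (E' t) (Icc a b) t := by
    intro t ht
    exact (((hu' t ht).pow 2).div_const s).add
      ((((hu t ht).pow 2)).const_mul (lam ^ 2 * s))
  have hE_cont : ContinuousOn E (Icc a b) := fun t ht => (hE t ht).continuousWithinAt
  have hEnonneg : ∀ t, 0 ≤ E t := by
    intro t
    have : E t = u' t ^ 2 / s + lam ^ 2 * s * u t ^ 2 := rfl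
    rw [this]
    positivity
  have hG_cont : ContinuousOn G (Icc a b) := by
    have := intervalIntegral.continuousOn_primitive_interval
      (f := g) (a := a) (b := b) (μ := volume) ?_
    · rwa [uIcc_of_le hab] at this
    · rw [uIcc_of_le hab]
      exact (hg_cont.mono Subset.rfl).integrableOn_compact isCompact_Icc
  set F : ℝ → ℝ := fun t => E t * Real.exp (-(k * G t)) with hF_def
  have hF_cont : ContinuousOn F (Icc a b) :=
    hE_cont.mul (((hG_cont.const_smul k).neg.rexp))
  have hanti : AntitoneOn F (Icc a b) := by
    apply antitoneOn_of_hasDerivWithinAt_nonpos (convex_Icc a b) hF_cont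
      (f' := fun x => E' x * Real.exp (-(k * G x)) +
        E x * (Real.exp (-(k * G x)) * -(k * g x)))
    · intro x hx
      rw [interior_Icc] at hx ⊢
      have hmem : x ∈ Icc a b := Ioo_subset_Icc_self hx
      have hnb : Icc a b ∈ nhds x := Icc_mem_nhds hx.1 hx.2
      have hEx : HasDerivAt E (E' x) x := (hE x hmem).hasDerivAt hnb
      have hg_int : IntervalIntegrable g volume a x :=
        (hg_cont.mono (Icc_subset_Icc le_rfl hmem.2)).intervalIntegrable_of_Icc hmem.1
      have hg_open : ContinuousOn g (Ioo a b) := hg_cont.mono Ioo_subset_Icc_self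
      have hGx : HasDerivAt G (g x) x :=
        intervalIntegral.integral_hasDerivAt_right hg_int
          (hg_open.stronglyMeasurableAtFilter isOpen_Ioo x hx)
          (hg_open.continuousAt (isOpen_Ioo.mem_nhds hx))
      have hFx : HasDerivAt F (E' x * Real.exp (-(k * G x)) +
          E x * (Real.exp (-(k * G x)) * -(k * g x))) x :=
        hEx.mul ((hGx.const_mul k).neg.exp)
      exact hFx.hasDerivWithinAt
    · intro x hx
      rw [interior_Icc] at hx
      have hmem : x ∈ Icc a b := Ioo_subset_Icc_self hx
      have hkey : E' x ≤ k * g x * E x := by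
        have hE'eq : E' x = -(2 * lam ^ 2 * u x * u' x * (c x - cinf)) / s := by
          rw [hE'_def]
          field_simp
          linear_combination (u x * u' x) * hs2
        have hEeq : E x = u' x ^ 2 / s + lam ^ 2 * s * u x ^ 2 := rfl
        rw [hE'eq, hEeq]
        exact kow_key lam s r (c x - cinf) (u x) (u' x) hlam hr hrs
      have hgx : 0 ≤ g x := abs_nonneg _
      have hexp : 0 < Real.exp (-(k * G x)) := Real.exp_pos _
      have : E' x * Real.exp (-(k * G x)) + E x * (Real.exp (-(k * G x)) * -(k * g x))
          = (E' x - k * g x * E x) * Real.exp (-(k * G x)) := by ring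
      rw [this]
      exact mul_nonpos_of_nonpos_of_nonneg (by linarith) hexp.le
  have hFb : F b ≤ F a :=
    hanti (left_mem_Icc.mpr hab) (right_mem_Icc.mpr hab) hab
  have hGa : G a = 0 := intervalIntegral.integral_same
  have hFa : F a = E a := by
    rw [hF_def]
    simp [hGa]
  rw [hFa] at hFb
  have : E b = F b * Real.exp (k * G b) := by
    rw [hF_def]
    rw [mul_assoc, ← Real.exp_add]
    simp
  show E b ≤ E a * Real.exp (k * G b)
  rw [this]
  exact mul_le_mul_of_nonneg_right hFb (Real.exp_pos _).le
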